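/- There exists a constant C > 0 such that for every integer q ≥ 2, every integer k ≥ 9, and any two words w and w' of the same length k over an alphabet of q letters with the autocorrelation of w larger than the autocorrelation of w', one has |A_w(q)³·A_{w'}'(q) − A_{w'}(q)³·A_w'(q)| / (A_{w'}(q)³·A_w(q)³) ≤ C·k·q^{-k/3+4}·(A_w(q) − A_{w'}(q)) / (A_{w'}(q)·A_w(q)). -/

import Mathlib

/-- The `i`-th autocorrelation bit `b_i` of a word `w` (for `1 ≤ i ≤ w.length`):
`1` if the prefix of `w` of length `i` equals the suffix of `w` of length `i`, else `0`. -/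
def acorrBit {α : Type*} [DecidableEq α] (w : List α) (i : ℕ) : ℕ :=
  if w.take i = w.drop (w.length - i) then 1 else 0

/-- The inverse autocorrelation polynomial `A_w(x) = ∑_{i=1}^k b_i x^(i-1)`, over `ℝ`. -/
noncomputable def APolyR {α : Type*} [DecidableEq α] (w : List α) : Polynomial ℝ :=
  ∑ i ∈ Finset.range w.length, Polynomial.C (acorrBit w (i + 1) : ℝ) * Polynomial.X ^ i

/-- The inverse autocorrelation polynomial `A_w(x)`, over `ℂ`. -/
noncomputable def APolyC {α : Type*} [DecidableEq α] (w : List α) : Polynomial ℂ :=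
  ∑ i ∈ Finset.range w.length, Polynomial.C (acorrBit w (i + 1) : ℂ) * Polynomial.X ^ i

/-- The recurrence polynomial `P_w(x) = 1 + (x - q)·A_w(x)`, over `ℝ`. -/
noncomputable def PPolyR (q : ℕ) {α : Type*} [DecidableEq α] (w : List α) : Polynomial ℝ :=
  1 + (Polynomial.X - Polynomial.C (q : ℝ)) * APolyR w

/-- The recurrence polynomial `P_w(x) = 1 + (x - q)·A_w(x)`, over `ℂ`. -/
noncomputable def PPolyC (q : ℕ) {α : Type*} [DecidableEq α] (w : List α) : Polynomial ℂ :=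
  1 + (Polynomial.X - Polynomial.C (q : ℂ)) * APolyC w

/-- `h_w(n)`: the number of words of length `n` over `Fin q` whose last `w.length` letters
equal `w` and which contain no other occurrence of `w` as consecutive letters. -/
noncomputable def hitCount (q : ℕ) (w : List (Fin q)) (n : ℕ) : ℕ :=
  Nat.card {l : List (Fin q) // l.length = n ∧ l.drop (n - w.length) = w ∧
    ∀ p < n - w.length, (l.drop p).take w.length ≠ w}

/-- The first hitting probability `P_h(w,n) = h_w(n+k)/q^(n+k)` where `k = w.length`. -/
noncomputable def hitProb (q : ℕ) (w : List (Fin q)) (n : ℕ) : ℝ :=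
  (hitCount q w (n + w.length) : ℝ) / (q : ℝ) ^ (n + w.length)

/-- The constant `C_{w/w'} = ln(1+r)/r` with `r = (A_w(q) − A_{w'}(q))/A_{w'}(q)`. -/
noncomputable def Crat (q : ℕ) (w w' : List (Fin q)) : ℝ :=
  Real.log (1 + ((APolyR w).eval (q : ℝ) - (APolyR w').eval (q : ℝ)) / (APolyR w').eval (q : ℝ)) /
    (((APolyR w).eval (q : ℝ) - (APolyR w').eval (q : ℝ)) / (APolyR w').eval (q : ℝ))

/-- The partial-fraction coefficient `c_w = 1/P_w'(α_m)`. -/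
noncomputable def cwCoef (q : ℕ) (w : List (Fin q)) (αm : ℝ) : ℝ :=
  1 / ((PPolyR q w).derivative.eval αm)



open Finset

section Words
variable {α : Type*} [DecidableEq α]

def Per (w : List α) (p : ℕ) : Prop := ∀ m (h : m + p < w.length),
  w[m]'(by omega) = w[m+p]'h

lemma acorrBit_le_one (w : List α) (i : ℕ) : acorrBit w i ≤ 1 := by
  unfold acorrBit; split <;> simp

lemma acorrBit_length (w : List α) : acorrBit w w.length = 1 := by
  simp [acorrBit]

lemma per_of_acorr {w : List α} {i : ℕ} (hi : i ≤ w.length) (h : acorrBit w i = 1) :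
    Per w (w.length - i) := by
  unfold acorrBit at h
  split at h
  · rename_i heq
    intro m hm
    have hmi : m < i := by omega
    have h1 : (w.take i)[m]'(by simp; omega) = w[m]'(by omega) := List.getElem_take
    have h2 : (w.drop (w.length - i))[m]'(by simp; omega) = w[(w.length - i) + m]'(by omega) :=
      List.getElem_drop
    simp only [heq] at h1
    have h3 : (w.length - i) + m = m + (w.length - i) := by omega
    simp only [h3] at h2
    rw [← h1, h2]
  · simp at h

lemma acorr_of_per {w : List α} {i : ℕ} (hi : i ≤ w.length) (h : Per w (w.length - i)) :
    acorrBit w i = 1 := by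
  unfold acorrBit
  rw [if_pos]
  apply List.ext_getElem
  · simp; omega
  · intro n h1 h2
    have hn : n < i := by simp at h1; omega
    have h2' : (w.drop (w.length - i))[n]'h2 = w[(w.length - i) + n]'(by simp at h2 ⊢; omega) :=
      List.getElem_drop
    have h1' : (w.take i)[n]'h1 = w[n]'(by omega) := List.getElem_take
    rw [h1', h2']
    have e := h n (by omega)
    have h3 : (w.length - i) + n = n + (w.length - i) := by omega
    simp only [h3]
    exact e

lemma const_of_per_per {w : List α} {p : ℕ} (hp : Per w p) (hp1 : Per w (p+1))
    (h2p : 2*p + 1 ≤ w.length) :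
    ∀ m n (hm : m < w.length) (hn : n < w.length), w[m] = w[n] := by
  have step : ∀ m (h : m + 1 < w.length), w[m]'(by omega) = w[m+1]'h := by
    intro m hm1
    by_cases hc : m + p + 1 < w.length
    · have e1 := hp1 m (by omega)
      have e2 := hp (m+1) (by omega)
      have h3 : m + (p+1) = m + 1 + p := by omega
      simp only [h3] at e1
      rw [e1, ← e2]
    · have hmp : p ≤ m := by omega
      have e1 := hp (m - p) (by omega)
      have e2 := hp1 (m - p) (by omega)
      have h1 : m - p + p = m := by omega
      have h2 : m - p + (p + 1) = m + 1 := by omega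
      simp only [h1] at e1
      simp only [h2] at e2
      rw [← e1, ← e2]
  have chain : ∀ d m (h : m + d < w.length), w[m]'(by omega) = w[m+d]'h := by
    intro d
    induction d with
    | zero => intro m h; rfl
    | succ d ih =>
      intro m h
      have e1 := ih m (by omega)
      have e2 := step (m+d) (by omega)
      have h3 : m + d + 1 = m + (d+1) := by omega
      simp only [h3] at e2
      rw [e1, e2]
  intro m n hm hn
  rcases le_total m n with h | h
  · have e := chain (n - m) m (by omega)
    have h3 : m + (n - m) = n := by omega
    simp only [h3] at e
    exact e
  · have e := chain (m - n) n (by omega)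
    have h3 : n + (m - n) = m := by omega
    simp only [h3] at e
    exact e.symm

lemma allbits_of_const {w : List α}
    (hconst : ∀ m n (hm : m < w.length) (hn : n < w.length), w[m] = w[n]) :
    ∀ i, acorrBit w i = 1 := by
  intro i
  by_cases hi : i ≤ w.length
  · apply acorr_of_per hi
    intro m h
    exact hconst m (m + (w.length - i)) (by omega) h
  · unfold acorrBit
    rw [if_pos]
    rw [List.take_of_length_le (by omega), show w.length - i = 0 by omega, List.drop_zero]

end Words


lemma APolyR_eval {α : Type*} [DecidableEq α] (w : List α) (x : ℝ) :
    (APolyR w).eval x = ∑ i ∈ Finset.range w.length, (acorrBit w (i + 1) : ℝ) * x ^ i := by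
  simp [APolyR, Polynomial.eval_finset_sum]

lemma APolyR_deriv_eval {α : Type*} [DecidableEq α] (w : List α) (x : ℝ) :
    (APolyR w).derivative.eval x
      = ∑ i ∈ Finset.range w.length, (acorrBit w (i + 1) : ℝ) * i * x ^ (i - 1) := by
  unfold APolyR
  rw [Polynomial.derivative_sum, Polynomial.eval_finset_sum]
  apply Finset.sum_congr rfl
  intro i _
  rw [Polynomial.derivative_C_mul_X_pow]
  simp [mul_assoc]

lemma natBitSum (γ : ℕ → ℕ) (hγ : ∀ i, γ i ≤ 1) :
    ∀ m, (∑ i ∈ Finset.range m, γ (i+1) * 2^i) ≤ 2^m - 1 := by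
  intro m
  induction m with
  | zero => simp
  | succ m ih =>
    rw [Finset.sum_range_succ]
    have h1 : 1 ≤ 2^m := Nat.one_le_two_pow
    have h2 : 2^(m+1) = 2*2^m := by rw [pow_succ]; ring
    have h3 := hγ (m+1)
    have h4 : γ (m+1) * 2^m ≤ 2^m := by
      calc γ (m+1) * 2^m ≤ 1 * 2^m := Nat.mul_le_mul_right _ h3
        _ = 2^m := one_mul _
    omega

lemma geo1 {Q : ℝ} (hQ : 2 ≤ Q) : ∀ m : ℕ, (∑ i ∈ range m, Q^i) + 1 ≤ Q^m := by
  intro m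
  induction m with
  | zero => simp
  | succ m ih =>
    rw [Finset.sum_range_succ]
    have h1 : (1:ℝ) ≤ Q^m := one_le_pow₀ (by linarith)
    have : Q^(m+1) = Q^m * Q := pow_succ Q m
    nlinarith

lemma geo2 {Q : ℝ} (hQ : 2 ≤ Q) : ∀ m : ℕ, (∑ i ∈ range (m+1), Q^i) ≤ 2 * Q^m := by
  intro m
  induction m with
  | zero => norm_num
  | succ m ih =>
    rw [Finset.sum_range_succ]
    have h1 : (0:ℝ) ≤ Q^m := by positivity
    have : Q^(m+1) = Q^m * Q := pow_succ Q m
    nlinarith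

lemma sumQm {Q : ℝ} (hQ : 2 ≤ Q) (m : ℕ) (hm : 1 ≤ m) :
    ∑ i ∈ range m, Q^(i-1) ≤ 2*Q^(m-2) + 1 := by
  obtain ⟨n, rfl⟩ : ∃ n, m = n + 1 := ⟨m - 1, by omega⟩
  rw [Finset.sum_range_succ']
  simp only [Nat.add_sub_cancel, Nat.zero_sub, pow_zero]
  have h2 : ∑ i ∈ range n, Q^i ≤ 2*Q^(n+1-2) := by
    rcases Nat.eq_zero_or_pos n with rfl | hn
    · simp only [Finset.range_zero, Finset.sum_empty]
      positivity
    · rw [show n = (n-1)+1 by omega, show n-1+1+1-2 = n-1 by omega]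
      exact geo2 hQ _
  linarith

lemma assemble (kR a b da db X Y E F G : ℝ)
    (hk9 : 9 ≤ kR) (hX0 : 0 < X) (hF0 : 0 < F) (hE1 : 1 ≤ E)
    (hb_lb : X ≤ b) (ha_lb : X ≤ a) (ha_ub : a ≤ 2*X)
    (hda0 : 0 ≤ da) (hdb0 : 0 ≤ db) (hY0 : 0 ≤ Y) (hda_ub : da ≤ 3*kR*Y)
    (hab1 : 1 ≤ a - b)
    (hF3 : |db - da| ≤ 24*kR*(a-b)*E)
    (hG1 : X^3 * E = G) (hG2 : Y * X^2 ≤ G) (hG3 : F * X^4 = G) :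
    |a^3*db - b^3*da| / (b^3*a^3) ≤ 400*kR*F*((a-b)/(b*a)) := by
  have hb0 : 0 < b := lt_of_lt_of_le hX0 hb_lb
  have ha0 : 0 < a := lt_of_lt_of_le hX0 ha_lb
  have hba : b ≤ a := by linarith
  have hab0 : (0:ℝ) ≤ a - b := by linarith
  have hk0 : (0:ℝ) ≤ kR := by linarith
  have hG0 : 0 < G := by rw [← hG3]; positivity
  have hb3a3 : b^3 ≤ a^3 := pow_le_pow_left₀ hb0.le hba 3
  have hcube0 : (0:ℝ) ≤ a^3 - b^3 := by linarith
  have hN1 : a^3 * |db - da| ≤ 192*kR*(a-b)*G := by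
    have ha3 : a^3 ≤ 8 * X^3 := by
      have := pow_le_pow_left₀ ha0.le ha_ub 3
      calc a^3 ≤ (2*X)^3 := this
        _ = 8 * X^3 := by ring
    calc a^3 * |db - da| ≤ (8*X^3) * (24*kR*(a-b)*E) :=
          mul_le_mul ha3 hF3 (abs_nonneg _) (by positivity)
      _ = 192*kR*(a-b)*(X^3*E) := by ring
      _ = 192*kR*(a-b)*G := by rw [hG1]
  have hN2 : da * (a^3 - b^3) ≤ 36*kR*(a-b)*G := by
    have hcubes : a^3 - b^3 ≤ 3*(a-b)*a^2 := by
      nlinarith [mul_nonneg (sq_nonneg (a-b)) (by linarith : (0:ℝ) ≤ 2*a + b)]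
    have ha2 : a^2 ≤ 4*X^2 := by
      have := pow_le_pow_left₀ ha0.le ha_ub 2
      calc a^2 ≤ (2*X)^2 := this
        _ = 4 * X^2 := by ring
    calc da * (a^3 - b^3) ≤ (3*kR*Y) * (a^3 - b^3) :=
          mul_le_mul_of_nonneg_right hda_ub hcube0
      _ ≤ (3*kR*Y) * (3*(a-b)*a^2) := by
          apply mul_le_mul_of_nonneg_left hcubes
          positivity
      _ ≤ (3*kR*Y) * (3*(a-b)*(4*X^2)) := by
          apply mul_le_mul_of_nonneg_left _ (by positivity)
          exact mul_le_mul_of_nonneg_left ha2 (by linarith)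
      _ = 36*kR*(a-b)*(Y*X^2) := by ring
      _ ≤ 36*kR*(a-b)*G := by
          apply mul_le_mul_of_nonneg_left hG2
          exact mul_nonneg (mul_nonneg (by norm_num) hk0) hab0
  have hNtot : |a^3*db - b^3*da| ≤ 228*kR*(a-b)*G := by
    have h1 : a^3*db - b^3*da = a^3*(db - da) + da*(a^3 - b^3) := by ring
    have habs : |a^3*db - b^3*da| ≤ a^3*|db - da| + da*(a^3 - b^3) := by
      rw [h1]
      calc |a^3*(db - da) + da*(a^3 - b^3)|
          ≤ |a^3*(db - da)| + |da*(a^3 - b^3)| := abs_add_le _ _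
        _ = a^3*|db - da| + da*(a^3 - b^3) := by
            rw [abs_mul, abs_mul, abs_of_nonneg (by positivity : (0:ℝ) ≤ a^3),
              abs_of_nonneg hda0, abs_of_nonneg hcube0]
    linarith
  have hX4 : X^4 ≤ b^2*a^2 := by
    have h1 : X*X ≤ b*a := mul_le_mul hb_lb ha_lb hX0.le (by linarith)
    have h2 : (X*X)*(X*X) ≤ (b*a)*(b*a) := mul_le_mul h1 h1 (by positivity) (by positivity)
    nlinarith [h2]
  have hfin : |a^3*db - b^3*da| ≤ 400*kR*F*(a-b)*(b^2*a^2) := by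
    have hP : (0:ℝ) ≤ kR*((a-b)*(F*(b^2*a^2))) :=
      mul_nonneg hk0 (mul_nonneg hab0 (by positivity))
    calc |a^3*db - b^3*da| ≤ 228*kR*(a-b)*G := hNtot
      _ = 228*kR*(a-b)*(F*X^4) := by rw [hG3]
      _ ≤ 228*kR*(a-b)*(F*(b^2*a^2)) := by
          apply mul_le_mul_of_nonneg_left _ (mul_nonneg (mul_nonneg (by norm_num) hk0) hab0)
          exact mul_le_mul_of_nonneg_left hX4 hF0.le
      _ ≤ 400*kR*F*(a-b)*(b^2*a^2) := by nlinarith [hP]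
  rw [div_le_iff₀ (by positivity)]
  have hrhs : 400*kR*F*((a-b)/(b*a)) * (b^3*a^3) = 400*kR*F*(a-b)*(b^2*a^2) := by
    field_simp
  rw [hrhs]
  exact hfin

lemma altSum (q L N : ℕ) (hq : 2 ≤ q) (γ : ℕ → ℕ) (hγ : ∀ i, γ i ≤ 1)
    (hna : ∀ n, L < n → n < N → γ n * γ (n+1) = 0) :
    ∀ M ≤ N, (q^2 - 1) * (∑ i ∈ Finset.Ico L M, γ (i+1) * q^i) ≤ q^(M+1) := by
  intro M
  induction M using Nat.strong_induction_on with
  | _ M ih =>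
    intro hMN
    by_cases hML : M ≤ L
    · rw [Finset.Ico_eq_empty (by omega)]
      simp
    · push_neg at hML
      obtain ⟨m, rfl⟩ : ∃ m, M = m + 1 := ⟨M - 1, by omega⟩
      have hLm : L ≤ m := by omega
      rw [Finset.sum_Ico_succ_top hLm]
      rcases Nat.le_one_iff_eq_zero_or_eq_one.mp (hγ (m+1)) with h0 | h1
      · rw [h0]
        simp only [zero_mul, add_zero]
        calc (q^2-1) * ∑ i ∈ Finset.Ico L m, γ (i+1) * q^i ≤ q^(m+1) := ih m (by omega) (by omega)
          _ ≤ q^(m+1+1) := Nat.pow_le_pow_right (by omega) (by omega)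
      · rw [h1, one_mul]
        rcases eq_or_lt_of_le hLm with rfl | hLm'
        · rw [Finset.Ico_self, Finset.sum_empty, zero_add]
          calc (q^2-1) * q^L ≤ q^2 * q^L := Nat.mul_le_mul_right _ (by omega)
            _ = q^(L+1+1) := by ring
        · have hγm : γ m = 0 := by
            have h2 := hna m hLm' (by omega)
            rcases Nat.le_one_iff_eq_zero_or_eq_one.mp (hγ m) with h | h
            · exact h
            · rw [h, h1] at h2; simp at h2
          obtain ⟨m', rfl⟩ : ∃ m', m = m' + 1 := ⟨m - 1, by omega⟩
          rw [Finset.sum_Ico_succ_top (by omega : L ≤ m'), hγm]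
          simp only [zero_mul, add_zero]
          have ihm := ih m' (by omega) (by omega)
          calc (q^2-1) * ((∑ i ∈ Finset.Ico L m', γ (i+1) * q^i) + q^(m'+1))
              = (q^2-1) * (∑ i ∈ Finset.Ico L m', γ (i+1) * q^i) + (q^2-1) * q^(m'+1) := by ring
            _ ≤ q^(m'+1) + (q^2-1) * q^(m'+1) := Nat.add_le_add_right ihm _
            _ = (1 + (q^2-1)) * q^(m'+1) := by ring
            _ ≤ q^2 * q^(m'+1) := Nat.mul_le_mul_right _
                (by have : 1 ≤ q^2 := Nat.one_le_pow _ _ (by omega); omega)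
            _ = q^(m'+1+1+1) := by ring

set_option maxHeartbeats 1000000 in
lemma master (q k j : ℕ) (β β' : ℕ → ℕ)
    (hq : 2 ≤ q) (hk : 9 ≤ k) (hj1 : 1 ≤ j) (hjk : j ≤ k - 1)
    (hβ : ∀ i, β i ≤ 1) (hβ' : ∀ i, β' i ≤ 1)
    (hβk : β k = 1) (hβ'k : β' k = 1)
    (hβj : β j = 1) (hβ'j : β' j = 0)
    (hagree : ∀ i, j < i → i ≤ k → β i = β' i)
    (hna : ∀ n, k ≤ 2*n+1 → n+1 ≤ k-1 → β' n * β' (n+1) = 0) :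
    |(∑ i ∈ range k, (β (i+1):ℝ) * (q:ℝ)^i)^3 * (∑ i ∈ range k, (β' (i+1):ℝ) * i * (q:ℝ)^(i-1))
      - (∑ i ∈ range k, (β' (i+1):ℝ) * (q:ℝ)^i)^3 * (∑ i ∈ range k, (β (i+1):ℝ) * i * (q:ℝ)^(i-1))| /
      ((∑ i ∈ range k, (β' (i+1):ℝ) * (q:ℝ)^i)^3 * (∑ i ∈ range k, (β (i+1):ℝ) * (q:ℝ)^i)^3)
    ≤ 400 * k * (q:ℝ)^(-(k:ℝ)/3+4) *
      (((∑ i ∈ range k, (β (i+1):ℝ) * (q:ℝ)^i) - ∑ i ∈ range k, (β' (i+1):ℝ) * (q:ℝ)^i) /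
        ((∑ i ∈ range k, (β' (i+1):ℝ) * (q:ℝ)^i) * (∑ i ∈ range k, (β (i+1):ℝ) * (q:ℝ)^i))) := by
  have hQ2 : (2:ℝ) ≤ (q:ℝ) := by exact_mod_cast hq
  set Q : ℝ := (q:ℝ) with hQdef
  have hQ0 : (0:ℝ) < Q := by linarith
  have hQ1 : (1:ℝ) ≤ Q := by linarith
  have hkR : (9:ℝ) ≤ (k:ℝ) := by exact_mod_cast hk
  have hjR : (1:ℝ) ≤ (j:ℝ) := by exact_mod_cast hj1
  set a := ∑ i ∈ range k, (β (i+1):ℝ) * Q^i with ha_def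
  set b := ∑ i ∈ range k, (β' (i+1):ℝ) * Q^i with hb_def
  set da := ∑ i ∈ range k, (β (i+1):ℝ) * i * Q^(i-1) with hda_def
  set db := ∑ i ∈ range k, (β' (i+1):ℝ) * i * Q^(i-1) with hdb_def
  clear_value Q a b da db
  have hβR : ∀ i, (β i:ℝ) ≤ 1 := fun i => by exact_mod_cast hβ i
  have hβ'R : ∀ i, (β' i:ℝ) ≤ 1 := fun i => by exact_mod_cast hβ' i
  have hmem : k-1 ∈ range k := by simp; omega
  have hb_lb : Q^(k-1) ≤ b := by
    rw [hb_def]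
    calc Q^(k-1) = (β' (k-1+1):ℝ) * Q^(k-1) := by
          rw [show k-1+1 = k by omega, hβ'k]; norm_num
      _ ≤ ∑ i ∈ range k, (β' (i+1):ℝ) * Q^i := Finset.single_le_sum (f := fun i => (β' (i+1):ℝ) * Q^i)
          (fun i _ => by positivity) hmem
  have ha_lb : Q^(k-1) ≤ a := by
    rw [ha_def]
    calc Q^(k-1) = (β (k-1+1):ℝ) * Q^(k-1) := by
          rw [show k-1+1 = k by omega, hβk]; norm_num
      _ ≤ ∑ i ∈ range k, (β (i+1):ℝ) * Q^i := Finset.single_le_sum (f := fun i => (β (i+1):ℝ) * Q^i)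
          (fun i _ => by positivity) hmem
  have hub : ∀ (γ : ℕ → ℕ), (∀ i, γ i ≤ 1) →
      (∑ i ∈ range k, (γ (i+1):ℝ) * Q^i) ≤ 2*Q^(k-1) := by
    intro γ hγ
    calc ∑ i ∈ range k, (γ (i+1):ℝ) * Q^i ≤ ∑ i ∈ range k, Q^i := by
          apply Finset.sum_le_sum
          intro i _
          have h1 : (γ (i+1):ℝ) ≤ 1 := by exact_mod_cast hγ _
          have h2 : (0:ℝ) ≤ Q^i := by positivity
          nlinarith
      _ = ∑ i ∈ range ((k-1)+1), Q^i := by rw [show (k-1)+1 = k by omega]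
      _ ≤ 2*Q^(k-1) := geo2 hQ2 _
  have ha_ub : a ≤ 2*Q^(k-1) := by rw [ha_def]; exact hub β hβ
  have hdub : ∀ (γ : ℕ → ℕ), (∀ i, γ i ≤ 1) →
      (∑ i ∈ range k, (γ (i+1):ℝ) * i * Q^(i-1)) ≤ 3*k*Q^(k-2) := by
    intro γ hγ
    have hk1 : (1:ℝ) ≤ Q^(k-2) := one_le_pow₀ hQ1
    calc ∑ i ∈ range k, (γ (i+1):ℝ) * i * Q^(i-1)
        ≤ ∑ i ∈ range k, ((k:ℝ)-1) * Q^(i-1) := by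
          apply Finset.sum_le_sum
          intro i hi
          have h0 : (0:ℝ) ≤ (γ (i+1):ℝ) := Nat.cast_nonneg _
          have h1 : (γ (i+1):ℝ) ≤ 1 := by exact_mod_cast hγ _
          have h2 : (0:ℝ) ≤ Q^(i-1) := by positivity
          have h3 : (i:ℝ) ≤ (k:ℝ)-1 := by
            have h5 : (i:ℝ) ≤ (k:ℝ) - 1 ↔ (i:ℝ) + 1 ≤ (k:ℝ) := by constructor <;> (intro; linarith)
            rw [h5]
            exact_mod_cast Nat.succ_le_of_lt (Finset.mem_range.mp hi)
          have h4 : (0:ℝ) ≤ (i:ℝ) := Nat.cast_nonneg _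
          have h5 : (γ (i+1):ℝ) * i ≤ (k:ℝ)-1 := by nlinarith
          exact mul_le_mul_of_nonneg_right h5 h2
      _ = ((k:ℝ)-1) * ∑ i ∈ range k, Q^(i-1) := by rw [← Finset.mul_sum]
      _ ≤ ((k:ℝ)-1) * (2*Q^(k-2)+1) :=
          mul_le_mul_of_nonneg_left (sumQm hQ2 k (by omega)) (by linarith)
      _ ≤ 3*k*Q^(k-2) := by nlinarith
  have hda_ub : da ≤ 3*k*Q^(k-2) := by rw [hda_def]; exact hdub β hβ
  have hda0 : 0 ≤ da := by
    rw [hda_def]; exact Finset.sum_nonneg fun i _ => by positivity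
  have hdb0 : 0 ≤ db := by
    rw [hdb_def]; exact Finset.sum_nonneg fun i _ => by positivity
  -- split helper
  have hsplit : ∀ (f : ℕ → ℝ), (∀ i, j ≤ i → i < k → f i = 0) →
      ∑ i ∈ range k, f i = ∑ i ∈ range j, f i := by
    intro f hf
    rw [← Finset.sum_range_add_sum_Ico f (show j ≤ k by omega)]
    have h0 : ∑ i ∈ Finset.Ico j k, f i = 0 := Finset.sum_eq_zero (fun i hi => by
      rw [Finset.mem_Ico] at hi; exact hf i hi.1 hi.2)
    rw [h0, add_zero]
  have hab_eq : a - b = Q^(j-1) + ∑ i ∈ range (j-1), ((β (i+1):ℝ) - (β' (i+1):ℝ)) * Q^i := by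
    rw [ha_def, hb_def, ← Finset.sum_sub_distrib]
    have e1 : ∀ i ∈ range k, (β (i+1):ℝ) * Q^i - (β' (i+1):ℝ) * Q^i
        = ((β (i+1):ℝ) - (β' (i+1):ℝ)) * Q^i := fun i _ => by ring
    rw [Finset.sum_congr rfl e1]
    rw [hsplit _ (fun i h1 h2 => by
      rw [hagree (i+1) (by omega) (by omega)]; ring)]
    have e2 : ∑ i ∈ range j, ((β (i+1):ℝ) - (β' (i+1):ℝ)) * Q^i
        = (∑ i ∈ range (j-1), ((β (i+1):ℝ) - (β' (i+1):ℝ)) * Q^i)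
          + ((β (j-1+1):ℝ) - (β' (j-1+1):ℝ)) * Q^(j-1) := by
      conv_lhs => rw [show j = (j-1)+1 by omega]
      exact Finset.sum_range_succ _ _
    rw [e2, show j-1+1 = j by omega, hβj, hβ'j]
    push_cast
    ring
  have hS_ge : - (∑ i ∈ range (j-1), (β' (i+1):ℝ) * Q^i)
      ≤ ∑ i ∈ range (j-1), ((β (i+1):ℝ) - (β' (i+1):ℝ)) * Q^i := by
    rw [← Finset.sum_neg_distrib]
    apply Finset.sum_le_sum
    intro i _
    have h2 : (0:ℝ) ≤ Q^i := by positivity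
    have h4 : (0:ℝ) ≤ (β (i+1):ℝ) := Nat.cast_nonneg _
    nlinarith
  have hab1 : 1 ≤ a - b := by
    have h1 : ∑ i ∈ range (j-1), (β' (i+1):ℝ) * Q^i ≤ Q^(j-1) - 1 := by
      calc ∑ i ∈ range (j-1), (β' (i+1):ℝ) * Q^i ≤ ∑ i ∈ range (j-1), Q^i := by
            apply Finset.sum_le_sum
            intro i _
            have h2 : (0:ℝ) ≤ Q^i := by positivity
            nlinarith [hβ'R (i+1)]
        _ ≤ Q^(j-1) - 1 := by linarith [geo1 hQ2 (j-1)]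
    linarith [hab_eq, hS_ge]
  -- derivative difference
  have hdd_eq : db - da = ∑ i ∈ range j, ((β' (i+1):ℝ) - (β (i+1):ℝ)) * ((i:ℝ) * Q^(i-1)) := by
    rw [hdb_def, hda_def, ← Finset.sum_sub_distrib]
    have e1 : ∀ i ∈ range k, (β' (i+1):ℝ) * i * Q^(i-1) - (β (i+1):ℝ) * i * Q^(i-1)
        = ((β' (i+1):ℝ) - (β (i+1):ℝ)) * ((i:ℝ) * Q^(i-1)) := fun i _ => by ring
    rw [Finset.sum_congr rfl e1]
    exact hsplit _ (fun i h1 h2 => by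
      rw [hagree (i+1) (by omega) (by omega)]; ring)
  have hdd1 : |db - da| ≤ 2*k*Q^(j-1) := by
    rw [hdd_eq]
    have hPj : (1:ℝ) ≤ Q^(j-1) := one_le_pow₀ hQ1
    calc |∑ i ∈ range j, ((β' (i+1):ℝ) - (β (i+1):ℝ)) * ((i:ℝ) * Q^(i-1))|
        ≤ ∑ i ∈ range j, |((β' (i+1):ℝ) - (β (i+1):ℝ)) * ((i:ℝ) * Q^(i-1))| :=
          Finset.abs_sum_le_sum_abs _ _
      _ ≤ ∑ i ∈ range j, ((j:ℝ)-1) * Q^(i-1) := by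
          apply Finset.sum_le_sum
          intro i hi
          rw [abs_mul]
          have h1 : |(β' (i+1):ℝ) - (β (i+1):ℝ)| ≤ 1 := by
            rw [abs_le]
            constructor <;> nlinarith [hβR (i+1), hβ'R (i+1),
              Nat.cast_nonneg (α := ℝ) (β (i+1)), Nat.cast_nonneg (α := ℝ) (β' (i+1))]
          have h2 : (0:ℝ) ≤ Q^(i-1) := by positivity
          have h3 : (i:ℝ) ≤ (j:ℝ)-1 := by
            have h5 : (i:ℝ) ≤ (j:ℝ) - 1 ↔ (i:ℝ) + 1 ≤ (j:ℝ) := by constructor <;> (intro; linarith)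
            rw [h5]
            exact_mod_cast Nat.succ_le_of_lt (Finset.mem_range.mp hi)
          have h4 : (0:ℝ) ≤ (i:ℝ) := Nat.cast_nonneg _
          rw [abs_of_nonneg (by positivity : (0:ℝ) ≤ (i:ℝ) * Q^(i-1))]
          calc |(β' (i+1):ℝ) - (β (i+1):ℝ)| * ((i:ℝ) * Q^(i-1))
              ≤ 1 * ((i:ℝ) * Q^(i-1)) := mul_le_mul_of_nonneg_right h1 (by positivity)
            _ = (i:ℝ) * Q^(i-1) := one_mul _
            _ ≤ ((j:ℝ)-1) * Q^(i-1) := mul_le_mul_of_nonneg_right h3 h2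
      _ = ((j:ℝ)-1) * ∑ i ∈ range j, Q^(i-1) := by rw [← Finset.mul_sum]
      _ ≤ ((j:ℝ)-1) * (2*Q^(j-2)+1) :=
          mul_le_mul_of_nonneg_left (sumQm hQ2 j hj1) (by linarith)
      _ ≤ 2*k*Q^(j-1) := by
          have hjkR : (j:ℝ) ≤ (k:ℝ) := by exact_mod_cast (show j ≤ k by omega)
          rcases Nat.lt_or_ge 1 j with h2 | h2
          · have hQs : Q^(j-2) * Q = Q^(j-1) := by
              rw [← pow_succ, show (j-2)+1 = j-1 by omega]
            have h2' : (0:ℝ) ≤ Q^(j-2) := by positivity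
            have e0 : (0:ℝ) ≤ (Q-2)*Q^(j-2) := mul_nonneg (by linarith) h2'
            have e1 : ((j:ℝ)-1) * (2*Q^(j-2)) ≤ ((j:ℝ)-1) * (Q^(j-2)*Q) :=
              mul_le_mul_of_nonneg_left (by nlinarith) (by linarith)
            rw [hQs] at e1
            have e2 : ((j:ℝ)-1)*Q^(j-1) ≤ (k:ℝ)*Q^(j-1) :=
              mul_le_mul_of_nonneg_right (by linarith) (by positivity)
            have e3 : (j:ℝ)-1 ≤ (k:ℝ)*Q^(j-1) := by nlinarith
            nlinarith [e1, e2, e3]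
          · have hj1'' : j = 1 := by omega
            subst hj1''
            norm_num
  set E := Q ^ ((2*(k:ℝ)+9)/3) with hE_def
  have hE1 : 1 ≤ E := Real.one_le_rpow hQ1 (by positivity)
  clear_value E
  have hF3 : |db - da| ≤ 24*(k:ℝ)*(a-b)*E := by
    by_cases hreg : 3*(j-1) ≤ 2*k+9
    · have h1 : Q^(j-1) ≤ E := by
        rw [hE_def, ← Real.rpow_natCast Q (j-1)]
        apply Real.rpow_le_rpow_of_exponent_le hQ1
        have h2 : ((3*(j-1):ℕ):ℝ) ≤ ((2*k+9:ℕ):ℝ) := by exact_mod_cast hreg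
        push_cast at h2
        linarith
      have hk0' : (0:ℝ) ≤ (k:ℝ) := by linarith
      have hE0 : (0:ℝ) ≤ E := by linarith
      calc |db - da| ≤ 2*(k:ℝ)*Q^(j-1) := hdd1
        _ ≤ 2*(k:ℝ)*E := by
            apply mul_le_mul_of_nonneg_left h1
            positivity
        _ ≤ 24*(k:ℝ)*(a-b)*E := by
            nlinarith [mul_nonneg (mul_nonneg hk0' hE0) (by linarith : (0:ℝ) ≤ a-b-1),
              mul_nonneg hk0' hE0]
    · push_neg at hreg
      set L := k/2 with hL_def
      have hLj : L + 3 ≤ j := by omega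
      have hna' : ∀ n, L < n → n < j-1 → β' n * β' (n+1) = 0 := by
        intro n h1 h2
        exact hna n (by omega) (by omega)
      have halt := altSum q L (j-1) hq β' hβ' hna' (j-1) le_rfl
      have hcastS : ((∑ i ∈ Finset.Ico L (j-1), β' (i+1) * q^i : ℕ) : ℝ)
          = ∑ i ∈ Finset.Ico L (j-1), (β' (i+1):ℝ) * Q^i := by
        rw [hQdef]
        push_cast
        rfl
      have haltR : (Q^2 - 1) * (∑ i ∈ Finset.Ico L (j-1), (β' (i+1):ℝ) * Q^i)
          ≤ Q^((j-1)+1) := by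
        have h1 : ((q^2 - 1 : ℕ):ℝ) = Q^2 - 1 := by
          have h2 : 1 ≤ q^2 := Nat.one_le_pow _ _ (by omega)
          rw [hQdef]
          push_cast [Nat.cast_sub h2]
          ring
        rw [← h1, ← hcastS, ← Nat.cast_mul]
        calc (((q^2-1) * ∑ i ∈ Finset.Ico L (j-1), β' (i+1) * q^i : ℕ):ℝ)
            ≤ ((q^((j-1)+1) : ℕ):ℝ) := by exact_mod_cast halt
          _ = Q^((j-1)+1) := by rw [hQdef]; push_cast; rfl
      have hS0 : (0:ℝ) ≤ ∑ i ∈ Finset.Ico L (j-1), (β' (i+1):ℝ) * Q^i :=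
        Finset.sum_nonneg fun i _ => by positivity
      have hP0 : (0:ℝ) < Q^(j-1) := by positivity
      have h42 : (4:ℝ) ≤ Q*Q := by
        calc (4:ℝ) = 2*2 := by norm_num
          _ ≤ Q*Q := mul_le_mul hQ2 hQ2 (by norm_num) (by linarith)
      have hQQ : (0:ℝ) < Q^2 - 1 := by rw [pow_two]; linarith
      have hStop : 3 * (∑ i ∈ Finset.Ico L (j-1), (β' (i+1):ℝ) * Q^i) ≤ 2 * Q^(j-1) := by
        rw [pow_succ Q (j-1)] at haltR
        have c2 : (0:ℝ) ≤ Q^(j-1) * ((Q-2)*(2*Q+1)) :=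
          mul_nonneg hP0.le (mul_nonneg (by linarith) (by linarith))
        have c3 : (3*(∑ i ∈ Finset.Ico L (j-1), (β' (i+1):ℝ) * Q^i))*(Q^2-1)
            ≤ (2*Q^(j-1))*(Q^2-1) := by nlinarith [haltR, c2]
        exact le_of_mul_le_mul_right c3 hQQ
      have hSlow : ∑ i ∈ range L, (β' (i+1):ℝ) * Q^i ≤ Q^(j-3) := by
        calc ∑ i ∈ range L, (β' (i+1):ℝ) * Q^i ≤ ∑ i ∈ range L, Q^i := by
              apply Finset.sum_le_sum
              intro i _
              have h2 : (0:ℝ) ≤ Q^i := by positivity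
              nlinarith [hβ'R (i+1)]
          _ ≤ Q^L - 1 := by linarith [geo1 hQ2 L]
          _ ≤ Q^(j-3) := by
              have := pow_le_pow_right₀ hQ1 (show L ≤ j-3 by omega)
              linarith
      have h4 : 4 * Q^(j-3) ≤ Q^(j-1) := by
        have he : Q^(j-3) * Q^2 = Q^(j-1) := by
          rw [← pow_add]
          congr 1
          omega
        calc 4 * Q^(j-3) ≤ (Q*Q) * Q^(j-3) :=
              mul_le_mul_of_nonneg_right h42 (pow_nonneg hQ0.le _)
          _ = Q^(j-3) * Q^2 := by ring
          _ = Q^(j-1) := he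
      have hSsplit : ∑ i ∈ range (j-1), (β' (i+1):ℝ) * Q^i
          = (∑ i ∈ range L, (β' (i+1):ℝ) * Q^i)
            + ∑ i ∈ Finset.Ico L (j-1), (β' (i+1):ℝ) * Q^i :=
        (Finset.sum_range_add_sum_Ico _ (by omega)).symm
      have hab_lb : Q^(j-1) ≤ 12*(a-b) := by
        have hS_le : ∑ i ∈ range (j-1), (β' (i+1):ℝ) * Q^i ≤ Q^(j-3) + (2/3)*Q^(j-1) := by
          rw [hSsplit]
          linarith [hSlow, hStop]
        linarith [hab_eq, hS_ge, h4, hS_le]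
      have hk0' : (0:ℝ) ≤ (k:ℝ) := by linarith
      have h24 : (0:ℝ) ≤ 24*(k:ℝ)*(a-b) :=
        mul_nonneg (mul_nonneg (by norm_num) hk0') (by linarith)
      calc |db - da| ≤ 2*(k:ℝ)*Q^(j-1) := hdd1
        _ ≤ 2*(k:ℝ)*(12*(a-b)) := by
            apply mul_le_mul_of_nonneg_left hab_lb
            positivity
        _ = (24*(k:ℝ)*(a-b)) * 1 := by ring
        _ ≤ (24*(k:ℝ)*(a-b)) * E := mul_le_mul_of_nonneg_left hE1 h24
        _ = 24*(k:ℝ)*(a-b)*E := by ring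
  -- final assembly
  have hx1 : Q^(k-1) = Q ^ ((k:ℝ)-1) := by
    rw [← Real.rpow_natCast Q (k-1), Nat.cast_sub (show 1 ≤ k by omega), Nat.cast_one]
  have hx2 : Q^(k-2) = Q ^ ((k:ℝ)-2) := by
    rw [← Real.rpow_natCast Q (k-2), Nat.cast_sub (show 2 ≤ k by omega), Nat.cast_ofNat]
  have hcube : ((Q ^ ((k:ℝ)-1))^(3:ℕ) : ℝ) = Q ^ (((k:ℝ)-1)*3) := by
    rw [← Real.rpow_natCast (Q ^ ((k:ℝ)-1)) 3, ← Real.rpow_mul hQ0.le]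
    norm_num
  have hsq : ((Q ^ ((k:ℝ)-1))^(2:ℕ) : ℝ) = Q ^ (((k:ℝ)-1)*2) := by
    rw [← Real.rpow_natCast (Q ^ ((k:ℝ)-1)) 2, ← Real.rpow_mul hQ0.le]
    norm_num
  have hquart : ((Q ^ ((k:ℝ)-1))^(4:ℕ) : ℝ) = Q ^ (((k:ℝ)-1)*4) := by
    rw [← Real.rpow_natCast (Q ^ ((k:ℝ)-1)) 4, ← Real.rpow_mul hQ0.le]
    norm_num
  apply assemble (k:ℝ) a b da db (Q ^ ((k:ℝ)-1)) (Q ^ ((k:ℝ)-2)) E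
      (Q ^ (-(k:ℝ)/3+4)) (Q ^ (11*(k:ℝ)/3)) hkR
      (Real.rpow_pos_of_pos hQ0 _) (Real.rpow_pos_of_pos hQ0 _) hE1
  · rw [← hx1]; exact hb_lb
  · rw [← hx1]; exact ha_lb
  · rw [← hx1]; exact ha_ub
  · exact hda0
  · exact hdb0
  · exact (Real.rpow_pos_of_pos hQ0 _).le
  · rw [← hx2]; exact hda_ub
  · exact hab1
  · exact hF3
  · rw [hE_def, hcube, ← Real.rpow_add hQ0]
    congr 1
    ring
  · rw [hsq, ← Real.rpow_add hQ0]
    apply Real.rpow_le_rpow_of_exponent_le hQ1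
    linarith
  · rw [hquart, ← Real.rpow_add hQ0]
    congr 1
    ring

/-- There is `C > 0` such that for all `q ≥ 2`, `k ≥ 9` and words `w, w'`
of common length `k` with the autocorrelation of `w` larger than that of `w'`,
`|A_w(q)³·A_{w'}'(q) − A_{w'}(q)³·A_w'(q)|/(A_{w'}(q)³·A_w(q)³)
  ≤ C·k·q^(−k/3+4)·(A_w(q) − A_{w'}(q))/(A_{w'}(q)·A_w(q))`. -/
theorem stmt13 :
    ∃ C : ℝ, 0 < C ∧ ∀ (q k : ℕ), 2 ≤ q → 9 ≤ k →
      ∀ w w' : List (Fin q), w.length = k → w'.length = k →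
        (APolyR w').eval 2 < (APolyR w).eval 2 →
        |(APolyR w).eval (q : ℝ) ^ 3 * (APolyR w').derivative.eval (q : ℝ) -
            (APolyR w').eval (q : ℝ) ^ 3 * (APolyR w).derivative.eval (q : ℝ)| /
          ((APolyR w').eval (q : ℝ) ^ 3 * (APolyR w).eval (q : ℝ) ^ 3) ≤
        C * k * (q : ℝ) ^ (-(k : ℝ) / 3 + 4) *
          (((APolyR w).eval (q : ℝ) - (APolyR w').eval (q : ℝ)) /
            ((APolyR w').eval (q : ℝ) * (APolyR w).eval (q : ℝ))) := by
  refine ⟨400, by norm_num, ?_⟩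
  intro q k hq hk w w' hw hw' hlt
  -- nat sums at 2
  have hB : (APolyR w).eval 2 = ((∑ i ∈ Finset.range k, acorrBit w (i+1) * 2^i : ℕ):ℝ) := by
    rw [APolyR_eval, hw]
    push_cast
    rfl
  have hB' : (APolyR w').eval 2 = ((∑ i ∈ Finset.range k, acorrBit w' (i+1) * 2^i : ℕ):ℝ) := by
    rw [APolyR_eval, hw']
    push_cast
    rfl
  have hlt2 : (∑ i ∈ Finset.range k, acorrBit w' (i+1) * 2^i)
      < (∑ i ∈ Finset.range k, acorrBit w (i+1) * 2^i) := by
    rw [hB, hB'] at hlt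
    exact_mod_cast hlt
  have hble := fun i => acorrBit_le_one w i
  have hble' := fun i => acorrBit_le_one w' i
  have hbitk : acorrBit w k = 1 := by rw [← hw]; exact acorrBit_length w
  have hbitk' : acorrBit w' k = 1 := by rw [← hw']; exact acorrBit_length w'
  -- top differing index
  set T := (Finset.range k).filter (fun i => acorrBit w (i+1) ≠ acorrBit w' (i+1)) with hT_def
  have hTne : T.Nonempty := by
    rcases Finset.eq_empty_or_nonempty T with he | hne
    · exfalso
      have hsame : ∀ i ∈ Finset.range k, acorrBit w (i+1) * 2^i = acorrBit w' (i+1) * 2^i := by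
        intro i hi
        by_cases hd : acorrBit w (i+1) = acorrBit w' (i+1)
        · rw [hd]
        · exfalso
          have : i ∈ T := Finset.mem_filter.mpr ⟨hi, hd⟩
          rw [he] at this
          exact absurd this (Finset.notMem_empty i)
      have := Finset.sum_congr rfl hsame
      omega
    · exact hne
  set i0 := T.max' hTne with hi0_def
  have hi0mem : i0 ∈ T := T.max'_mem hTne
  have hi0r : i0 ∈ Finset.range k := (Finset.mem_filter.mp hi0mem).1
  have hi0d : acorrBit w (i0+1) ≠ acorrBit w' (i0+1) := (Finset.mem_filter.mp hi0mem).2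
  have hi0max : ∀ i ∈ T, i ≤ i0 := fun i hi => T.le_max' i hi
  have hagree : ∀ i, i0+1 < i → i ≤ k → acorrBit w i = acorrBit w' i := by
    intro i h1 h2
    by_contra hne
    have hm : i - 1 ∈ T := Finset.mem_filter.mpr
      ⟨Finset.mem_range.mpr (by omega), by rw [show i-1+1 = i by omega]; exact hne⟩
    have := hi0max _ hm
    omega
  have hi0k : i0 + 1 ≤ k - 1 := by
    have h1 : i0 < k := Finset.mem_range.mp hi0r
    rcases Nat.lt_or_ge (i0+1) k with h2 | h2
    · omega
    · exfalso
      have : i0 + 1 = k := by omega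
      rw [this, hbitk, hbitk'] at hi0d
      exact hi0d rfl
  -- direction of the top differing bit
  have hsplitB : ∀ γ : ℕ → ℕ, (∑ i ∈ Finset.range k, γ (i+1) * 2^i)
      = (∑ i ∈ Finset.range i0, γ (i+1) * 2^i) + γ (i0+1) * 2^i0
        + (∑ i ∈ Finset.Ico (i0+1) k, γ (i+1) * 2^i) := by
    intro γ
    rw [← Finset.sum_range_add_sum_Ico _ (show i0+1 ≤ k by omega), Finset.sum_range_succ]
  have htail : (∑ i ∈ Finset.Ico (i0+1) k, acorrBit w (i+1) * 2^i)
      = (∑ i ∈ Finset.Ico (i0+1) k, acorrBit w' (i+1) * 2^i) := by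
    apply Finset.sum_congr rfl
    intro i hi
    rw [Finset.mem_Ico] at hi
    rw [hagree (i+1) (by omega) (by omega)]
  have hdir : acorrBit w (i0+1) = 1 ∧ acorrBit w' (i0+1) = 0 := by
    by_contra h
    have hA : acorrBit w (i0+1) = 0 := by
      have := hble (i0+1); have := hble' (i0+1); omega
    have hBv : acorrBit w' (i0+1) = 1 := by
      have := hble (i0+1); have := hble' (i0+1); omega
    have hlow : (∑ i ∈ Finset.range i0, acorrBit w (i+1) * 2^i) ≤ 2^i0 - 1 :=
      natBitSum _ hble i0
    have hs1 := hsplitB (acorrBit w)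
    have hs2 := hsplitB (acorrBit w')
    have h1 : 1 ≤ 2^i0 := Nat.one_le_two_pow
    rw [hs1, hs2, hA, hBv] at hlt2
    omega
  -- constant-word vs no-adjacent-bits case analysis for w'
  by_cases hadj : ∃ n, k ≤ 2*n+1 ∧ n+1 ≤ k-1 ∧ acorrBit w' n = 1 ∧ acorrBit w' (n+1) = 1
  · exfalso
    obtain ⟨n, hn1, hn2, ha1, ha2⟩ := hadj
    have hlen : w'.length = k := hw'
    have hp : Per w' (w'.length - (n+1)) := per_of_acorr (by omega) ha2
    have hp1 : Per w' ((w'.length - (n+1)) + 1) := by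
      rw [show (w'.length - (n+1)) + 1 = w'.length - n by omega]
      exact per_of_acorr (by omega) ha1
    have hconst := const_of_per_per hp hp1 (by omega)
    have hall := allbits_of_const hconst
    have : (∑ i ∈ Finset.range k, acorrBit w (i+1) * 2^i)
        ≤ (∑ i ∈ Finset.range k, acorrBit w' (i+1) * 2^i) := by
      apply Finset.sum_le_sum
      intro i _
      rw [hall (i+1)]
      exact Nat.mul_le_mul_right _ (hble (i+1))
    omega
  · push_neg at hadj
    have hna : ∀ n, k ≤ 2*n+1 → n+1 ≤ k-1 → acorrBit w' n * acorrBit w' (n+1) = 0 := by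
      intro n h1 h2
      have h3 := hadj n h1 h2
      have h4 := hble' n
      have h5 := hble' (n+1)
      rcases Nat.le_one_iff_eq_zero_or_eq_one.mp h4 with h | h
      · rw [h]; ring
      · rcases Nat.le_one_iff_eq_zero_or_eq_one.mp h5 with h' | h'
        · rw [h']; ring
        · exact absurd h' (h3 h)
    rw [APolyR_eval, APolyR_eval, APolyR_deriv_eval, APolyR_deriv_eval, hw, hw']
    exact master q k (i0+1) (acorrBit w) (acorrBit w') hq hk (by omega) hi0k
      hble hble' hbitk hbitk' hdir.1 hdir.2 hagree hna
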